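/- Let $\psi:\mathbb{R}^p\to\mathbb{R}$ be differentiable with $\ell_\psi$-Lipschitz gradient, and let the ascent direction $t\in\mathbb{R}^p$ and point $y$ with update $y^+=y+\beta t$ where $\beta>0$. Suppose $\|t\|\le\Gamma_t\|v\|$ and $t^\top \nabla\psi(y) \ge c_1\|\nabla\psi(y)\|^2 - c_2\epsilon^2$ for constants $\Gamma_t,c_1,c_2>0$, where $\|v\|^2\le 2\|\nabla\psi(y)\|^2+2\epsilon^2$. Then $\psi(y^+) \ge \psi(y) + \beta(c_1-\beta\ell_\psi\Gamma_t^2)\|\nabla\psi(y)\|^2 - \beta(c_2+\beta\ell_\psi\Gamma_t^2)\epsilon^2$. -/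

import Mathlib

open scoped RealInnerProductSpace

/-- Descent (ascent) lemma for Lipschitz gradients. -/
lemma descent_lemma {p : ℕ}
    (ψ : EuclideanSpace ℝ (Fin p) → ℝ)
    (gψ : EuclideanSpace ℝ (Fin p) → EuclideanSpace ℝ (Fin p))
    (ℓψ : ℝ) (hℓψ : 0 ≤ ℓψ)
    (hgrad : ∀ y, HasGradientAt ψ (gψ y) y)
    (hlip : ∀ y z, ‖gψ y - gψ z‖ ≤ ℓψ * ‖y - z‖)
    (y h : EuclideanSpace ℝ (Fin p)) :
    ψ y + ⟪gψ y, h⟫ - ℓψ / 2 * ‖h‖ ^ 2 ≤ ψ (y + h) := by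
  set F : ℝ → ℝ := fun s => ψ (y + s • h) - s * ⟪gψ y, h⟫ + s ^ 2 * (ℓψ * ‖h‖ ^ 2 / 2)
    with hF
  have hline : ∀ s : ℝ, HasDerivAt (fun s : ℝ => y + s • h) h s := by
    intro s
    simpa using ((hasDerivAt_id s).smul_const h).const_add y
  have hderiv : ∀ s : ℝ, HasDerivAt F
      (⟪gψ (y + s • h), h⟫ - ⟪gψ y, h⟫ + s * (ℓψ * ‖h‖ ^ 2)) s := by
    intro s
    have h1 : HasDerivAt (fun s : ℝ => ψ (y + s • h)) ⟪gψ (y + s • h), h⟫ s := by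
      have := ((hgrad (y + s • h)).hasFDerivAt).comp_hasDerivAt s (hline s)
      simpa [InnerProductSpace.toDual_apply_apply, Function.comp_def] using this
    have h2 : HasDerivAt (fun s : ℝ => s * ⟪gψ y, h⟫) ⟪gψ y, h⟫ s := by
      simpa using (hasDerivAt_id s).mul_const (⟪gψ y, h⟫)
    have h3 : HasDerivAt (fun s : ℝ => s ^ 2 * (ℓψ * ‖h‖ ^ 2 / 2))
        (2 * s * (ℓψ * ‖h‖ ^ 2 / 2)) s := by
      simpa using (hasDerivAt_pow 2 s).mul_const (ℓψ * ‖h‖ ^ 2 / 2)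
    have := (h1.sub h2).add h3
    convert this using 1
    case e'_4 => rfl
    case e'_5 => rfl
    case e'_8 => rfl
    case e'_9 => ring
  have hmono : MonotoneOn F (Set.Icc (0:ℝ) 1) := by
    apply monotoneOn_of_deriv_nonneg (convex_Icc 0 1)
    · exact fun x _ => (hderiv x).continuousAt.continuousWithinAt
    · intro s _
      exact (hderiv s).differentiableAt.differentiableWithinAt
    · intro s hs
      rw [(hderiv s).deriv]
      have hs0 : 0 ≤ s := by
        simp only [interior_Icc, Set.mem_Ioo] at hs; exact hs.1.le
      have key : |⟪gψ (y + s • h) - gψ y, h⟫| ≤ s * (ℓψ * ‖h‖ ^ 2) := by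
        calc |⟪gψ (y + s • h) - gψ y, h⟫| ≤ ‖gψ (y + s • h) - gψ y‖ * ‖h‖ :=
              abs_real_inner_le_norm _ _
          _ ≤ ℓψ * ‖(y + s • h) - y‖ * ‖h‖ := by
              gcongr; exact hlip _ _
          _ = s * (ℓψ * ‖h‖ ^ 2) := by
              rw [add_sub_cancel_left, norm_smul, Real.norm_eq_abs, abs_of_nonneg hs0]
              ring
      have := neg_abs_le (⟪gψ (y + s • h) - gψ y, h⟫)
      rw [inner_sub_left] at this key
      nlinarith [abs_nonneg (⟪gψ (y + s • h), h⟫ - ⟪gψ y, h⟫)]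
  have := hmono (Set.left_mem_Icc.mpr zero_le_one) (Set.right_mem_Icc.mpr zero_le_one)
    zero_le_one
  simp only [hF, zero_smul, add_zero, one_smul, zero_mul, sub_zero, one_pow, one_mul,
    zero_pow, two_ne_zero] at this
  linarith

theorem ascent_step_estimate {p : ℕ}
    (ψ : EuclideanSpace ℝ (Fin p) → ℝ)
    (gψ : EuclideanSpace ℝ (Fin p) → EuclideanSpace ℝ (Fin p))
    (ℓψ Γt c1 c2 β ε : ℝ)
    (hℓψ : 0 ≤ ℓψ) (hΓt : 0 < Γt) (hc1 : 0 < c1) (hc2 : 0 < c2) (hβ : 0 < β)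
    (hgrad : ∀ y, HasGradientAt ψ (gψ y) y)
    (hlip : ∀ y z, ‖gψ y - gψ z‖ ≤ ℓψ * ‖y - z‖)
    (t v y : EuclideanSpace ℝ (Fin p))
    (ht : ‖t‖ ≤ Γt * ‖v‖)
    (hinner : c1 * ‖gψ y‖ ^ 2 - c2 * ε ^ 2 ≤ ⟪t, gψ y⟫)
    (hv : ‖v‖ ^ 2 ≤ 2 * ‖gψ y‖ ^ 2 + 2 * ε ^ 2) :
    ψ y + β * (c1 - β * ℓψ * Γt ^ 2) * ‖gψ y‖ ^ 2 -
      β * (c2 + β * ℓψ * Γt ^ 2) * ε ^ 2 ≤ ψ (y + β • t) := by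
  have hd := descent_lemma ψ gψ ℓψ hℓψ hgrad hlip y (β • t)
  have hn : ‖β • t‖ ^ 2 = β ^ 2 * ‖t‖ ^ 2 := by
    rw [norm_smul, Real.norm_eq_abs]; rw [mul_pow, sq_abs]
  have hi : ⟪gψ y, β • t⟫ = β * ⟪t, gψ y⟫ := by
    rw [real_inner_smul_right, real_inner_comm]
  rw [hn, hi] at hd
  have ht2 : ‖t‖ ^ 2 ≤ Γt ^ 2 * ‖v‖ ^ 2 := by
    have := mul_self_le_mul_self (norm_nonneg t) ht
    nlinarith
  have e1 : β * (c1 * ‖gψ y‖ ^ 2 - c2 * ε ^ 2) ≤ β * ⟪t, gψ y⟫ :=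
    mul_le_mul_of_nonneg_left hinner hβ.le
  have e2 : ‖t‖ ^ 2 ≤ Γt ^ 2 * (2 * ‖gψ y‖ ^ 2 + 2 * ε ^ 2) :=
    ht2.trans (mul_le_mul_of_nonneg_left hv (sq_nonneg Γt))
  have e3 : ℓψ / 2 * β ^ 2 * ‖t‖ ^ 2 ≤
      ℓψ / 2 * β ^ 2 * (Γt ^ 2 * (2 * ‖gψ y‖ ^ 2 + 2 * ε ^ 2)) :=
    mul_le_mul_of_nonneg_left e2 (by positivity)
  nlinarith [e1, e3]
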